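/- Let R be an integral domain, let fS(R) denote the set of finitely generated ideals of R, and let ν : fS(R) → ℕ∞ be a function satisfying: ν(0) = 0 and ν(R) = ∞; min{ν(I), ν(J)} ≤ ν(IJ) for all I, J ∈ fS(R); and ν(I) = sup{ν(J) : J ⊆ I, J ∈ fS(R)} for all I ∈ fS(R). Then there is a unique ideal valuation ν̃ on R with ν̃(J) = ν(J) for every finitely generated ideal J of R, and it is given by ν̃(I) = sup{ν(J) : J ⊆ I, J ∈ fS(R)}. -/

import Mathlib

/-- An ideal valuation on an integral domain `R`. -/
def IsIdealValuation (R : Type*) [CommRing R] (ν : Ideal R → ℕ∞) : Prop :=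
  ν ⊥ = 0 ∧ ν ⊤ = ⊤ ∧
  (∀ I J : Ideal R, min (ν I) (ν J) ≤ ν (I * J)) ∧
  (∀ I : Ideal R, ν I = ⨆ (J : Ideal R) (_ : J ≤ I) (_ : J.FG), ν J)

/-- A function defined on the finitely generated ideals of `R` satisfying (IV1)-(IV3)
extends uniquely to an ideal valuation on `R`, given by the supremum formula. -/
theorem idealValuation_unique_extension_from_fg
    (R : Type*) [CommRing R] [IsDomain R] (ν : {J : Ideal R // J.FG} → ℕ∞)
    (h0 : ∀ J : {J : Ideal R // J.FG}, J.1 = ⊥ → ν J = 0)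
    (htop : ∀ J : {J : Ideal R // J.FG}, J.1 = ⊤ → ν J = ⊤)
    (hmul : ∀ I J L : {J : Ideal R // J.FG}, L.1 = I.1 * J.1 → min (ν I) (ν J) ≤ ν L)
    (hsup : ∀ I : {J : Ideal R // J.FG}, ν I = ⨆ (J : {J : Ideal R // J.FG}) (_ : J.1 ≤ I.1), ν J) :
    (∃! t : Ideal R → ℕ∞,
        IsIdealValuation R t ∧ ∀ J : {J : Ideal R // J.FG}, t J.1 = ν J) ∧
    (∀ t : Ideal R → ℕ∞,
        (IsIdealValuation R t ∧ ∀ J : {J : Ideal R // J.FG}, t J.1 = ν J) →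
        ∀ I : Ideal R, t I = ⨆ (J : {J : Ideal R // J.FG}) (_ : J.1 ≤ I), ν J) := by
  classical
  set T : Ideal R → ℕ∞ := fun I => ⨆ (J : {J : Ideal R // J.FG}) (_ : J.1 ≤ I), ν J with hTdef
  have hagree : ∀ J : {J : Ideal R // J.FG}, T J.1 = ν J := fun J => (hsup J).symm
  -- conversion between the two shapes of suprema
  have hconv : ∀ (I : Ideal R) (f : Ideal R → ℕ∞),
      (⨆ (J : Ideal R) (_ : J ≤ I) (_ : J.FG), f J)
        = ⨆ (J : {J : Ideal R // J.FG}) (_ : J.1 ≤ I), f J.1 := by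
    intro I f
    apply le_antisymm
    · refine iSup_le fun J => iSup_le fun hle => iSup_le fun hfg => ?_
      exact le_iSup_of_le ⟨J, hfg⟩ (le_iSup_of_le hle le_rfl)
    · refine iSup_le fun J => iSup_le fun hle => ?_
      exact le_iSup_of_le J.1 (le_iSup_of_le hle (le_iSup_of_le J.2 le_rfl))
  have hTbot : T ⊥ = 0 := by
    refine le_antisymm ?_ zero_le
    refine iSup_le fun J => iSup_le fun hle => ?_
    exact le_of_eq (h0 J (le_bot_iff.mp hle))
  have htopFG : (⊤ : Ideal R).FG := ⟨{1}, by simp⟩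
  have hTtop : T ⊤ = ⊤ := by
    refine le_antisymm le_top ?_
    refine le_iSup_of_le ⟨⊤, htopFG⟩ (le_iSup_of_le le_rfl ?_)
    exact le_of_eq (htop ⟨⊤, htopFG⟩ rfl).symm
  have hTmul : ∀ I J : Ideal R, min (T I) (T J) ≤ T (I * J) := by
    intro I J
    by_contra hc
    push_neg at hc
    have h1 : T (I * J) < T I := lt_of_lt_of_le hc (min_le_left _ _)
    have h2 : T (I * J) < T J := lt_of_lt_of_le hc (min_le_right _ _)
    rw [hTdef] at h1 h2
    simp only [lt_iSup_iff] at h1 h2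
    obtain ⟨A, hAI, hA⟩ := h1
    obtain ⟨B, hBJ, hB⟩ := h2
    have hABfg : (A.1 * B.1).FG := Submodule.FG.mul A.2 B.2
    have hle : A.1 * B.1 ≤ I * J := Ideal.mul_mono hAI hBJ
    have : ν ⟨A.1 * B.1, hABfg⟩ ≤ T (I * J) :=
      le_iSup_of_le ⟨A.1 * B.1, hABfg⟩ (le_iSup_of_le hle le_rfl)
    have hmin : min (ν A) (ν B) ≤ T (I * J) :=
      le_trans (hmul A B ⟨A.1 * B.1, hABfg⟩ rfl) this
    rcases min_le_iff.mp hmin with h | h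
    · exact absurd h (not_le_of_gt hA)
    · exact absurd h (not_le_of_gt hB)
  have hTsup : ∀ I : Ideal R, T I = ⨆ (J : Ideal R) (_ : J ≤ I) (_ : J.FG), T J := by
    intro I
    rw [hconv I T]
    exact iSup_congr fun J => iSup_congr fun _ => (hagree J).symm
  have hTval : IsIdealValuation R T := ⟨hTbot, hTtop, hTmul, hTsup⟩
  -- any valuation agreeing with ν on fg ideals equals T
  have key : ∀ t : Ideal R → ℕ∞,
      (IsIdealValuation R t ∧ ∀ J : {J : Ideal R // J.FG}, t J.1 = ν J) →
      ∀ I : Ideal R, t I = T I := by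
    intro t ⟨⟨_, _, _, hts⟩, hta⟩ I
    rw [hts I, hconv I t]
    exact iSup_congr fun J => iSup_congr fun _ => hta J
  refine ⟨⟨T, ⟨hTval, hagree⟩, fun t ht => funext (key t ht)⟩, fun t ht I => key t ht I⟩
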